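/- Let V be a twice differentiable function on ℝ² ∖ {0} that is homogeneous of degree −2, i.e., V(t q₁, t q₂) = t⁻² V(q₁,q₂) for all t > 0. Then F₁ := (1/2)(q₁p₂ − q₂p₁)² + (q₁² + q₂²)V(q₁,q₂) is a first integral of the Hamiltonian H := (1/2)(p₁² + p₂²) + V(q₁,q₂), i.e., the Poisson bracket {H, F₁} vanishes identically on (ℝ² ∖ {0}) × ℝ². -/

import Mathlib

/-- The canonical Poisson bracket of two functions of `(q₁, q₂, p₁, p₂)`. -/
noncomputable def poissonBracket (F G : ℝ → ℝ → ℝ → ℝ → ℝ)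
    (q₁ q₂ p₁ p₂ : ℝ) : ℝ :=
  deriv (fun x => F x q₂ p₁ p₂) q₁ * deriv (fun x => G q₁ q₂ x p₂) p₁
  - deriv (fun x => F q₁ q₂ x p₂) p₁ * deriv (fun x => G x q₂ p₁ p₂) q₁
  + deriv (fun x => F q₁ x p₁ p₂) q₂ * deriv (fun x => G q₁ q₂ p₁ x) p₂
  - deriv (fun x => F q₁ q₂ p₁ x) p₂ * deriv (fun x => G q₁ x p₁ p₂) q₂

/-- For a twice differentiable potential `V` on `ℝ² ∖ {0}` which is
homogeneous of degree `-2`, the function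
`F₁ = (1/2)(q₁p₂ - q₂p₁)² + (q₁² + q₂²) V(q₁,q₂)` is a first integral of
`H = (1/2)(p₁² + p₂²) + V(q₁,q₂)`: the Poisson bracket `{H, F₁}` vanishes identically on
`(ℝ² ∖ {0}) × ℝ²`. -/
theorem homogeneous_deg_neg_two_first_integral
    (V : ℝ × ℝ → ℝ)
    (hV : ContDiffOn ℝ 2 V {q : ℝ × ℝ | q ≠ 0})
    (hhom : ∀ t : ℝ, 0 < t → ∀ q : ℝ × ℝ, q ≠ 0 →
      V (t * q.1, t * q.2) = t⁻¹ ^ 2 * V q)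
    (H F₁ : ℝ → ℝ → ℝ → ℝ → ℝ)
    (hH : H = fun q₁ q₂ p₁ p₂ => (1 / 2) * (p₁ ^ 2 + p₂ ^ 2) + V (q₁, q₂))
    (hF₁ : F₁ = fun q₁ q₂ p₁ p₂ =>
      (1 / 2) * (q₁ * p₂ - q₂ * p₁) ^ 2 + (q₁ ^ 2 + q₂ ^ 2) * V (q₁, q₂)) :
    ∀ q₁ q₂ p₁ p₂ : ℝ, (q₁, q₂) ≠ (0, 0) →
      poissonBracket H F₁ q₁ q₂ p₁ p₂ = 0 := by
  subst hH hF₁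
  intro q₁ q₂ p₁ p₂ hq
  have hq0 : ((q₁, q₂) : ℝ × ℝ) ≠ 0 := by
    simpa [Prod.ext_iff] using hq
  -- V is differentiable at (q₁, q₂)
  have hopen : IsOpen {q : ℝ × ℝ | q ≠ 0} := isOpen_compl_singleton
  have hVd : DifferentiableAt ℝ V (q₁, q₂) :=
    (hV.differentiableOn (by norm_num)).differentiableAt (hopen.mem_nhds hq0)
  set f := fderiv ℝ V (q₁, q₂) with hfdef
  have hf : HasFDerivAt V f (q₁, q₂) := hVd.hasFDerivAt
  set Vx := f (1, 0) with hVxdef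
  set Vy := f (0, 1) with hVydef
  set v := V (q₁, q₂) with hvdef
  -- partial derivatives of V
  have hVx : HasDerivAt (fun x => V (x, q₂)) Vx q₁ :=
    hf.comp_hasDerivAt q₁ ((hasDerivAt_id q₁).prodMk (hasDerivAt_const q₁ q₂))
  have hVy : HasDerivAt (fun y => V (q₁, y)) Vy q₂ :=
    hf.comp_hasDerivAt q₂ ((hasDerivAt_const q₂ q₁).prodMk (hasDerivAt_id q₂))
  -- linearity
  have hlin : f (q₁, q₂) = q₁ * Vx + q₂ * Vy := by
    have h : ((q₁, q₂) : ℝ × ℝ) = q₁ • ((1:ℝ), (0:ℝ)) + q₂ • ((0:ℝ), (1:ℝ)) := by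
      simp [Prod.ext_iff]
    rw [h, map_add, map_smul, map_smul, smul_eq_mul, smul_eq_mul]
  -- Euler's relation
  have hEuler : q₁ * Vx + q₂ * Vy = -2 * v := by
    have hcurve : HasDerivAt (fun t : ℝ => (t * q₁, t * q₂)) (q₁, q₂) 1 := by
      simpa using ((hasDerivAt_id (1:ℝ)).mul_const q₁).prodMk
        ((hasDerivAt_id (1:ℝ)).mul_const q₂)
    have hf' : HasFDerivAt V f (1 * q₁, 1 * q₂) := by
      rw [one_mul, one_mul]; exact hf
    have hg : HasDerivAt (fun t : ℝ => V (t * q₁, t * q₂)) (f (q₁, q₂)) 1 :=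
      hf'.comp_hasDerivAt 1 hcurve
    have h2v : HasDerivAt (fun t : ℝ => t⁻¹ ^ 2 * v) (-2 * v) 1 := by
      have h1 : HasDerivAt (fun t : ℝ => t⁻¹) (-1) 1 := by
        simpa using hasDerivAt_inv (one_ne_zero (α := ℝ))
      have h2 := (h1.pow 2).mul_const v
      exact h2.congr_deriv (by norm_num)
    have heq : (fun t : ℝ => V (t * q₁, t * q₂)) =ᶠ[nhds 1] (fun t : ℝ => t⁻¹ ^ 2 * v) := by
      filter_upwards [Ioi_mem_nhds (zero_lt_one (α := ℝ))] with t ht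
      exact hhom t ht (q₁, q₂) hq0
    have := hg.unique (h2v.congr_of_eventuallyEq heq)
    rw [← hlin, this]
  -- derivatives of H
  have hHq1 : HasDerivAt (fun x => (1/2) * (p₁ ^ 2 + p₂ ^ 2) + V (x, q₂)) Vx q₁ :=
    hVx.const_add _
  have hHq2 : HasDerivAt (fun y => (1/2) * (p₁ ^ 2 + p₂ ^ 2) + V (q₁, y)) Vy q₂ :=
    hVy.const_add _
  have hHp1 : HasDerivAt (fun x => (1/2) * (x ^ 2 + p₂ ^ 2) + V (q₁, q₂)) p₁ p₁ := by
    have := ((((hasDerivAt_id p₁).pow 2).add_const (p₂ ^ 2)).const_mul (1/2)).add_const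
      (V (q₁, q₂))
    exact this.congr_deriv (by simp only [id_eq]; ring)
  have hHp2 : HasDerivAt (fun x => (1/2) * (p₁ ^ 2 + x ^ 2) + V (q₁, q₂)) p₂ p₂ := by
    have := ((((hasDerivAt_id p₂).pow 2).const_add (p₁ ^ 2)).const_mul (1/2)).add_const
      (V (q₁, q₂))
    exact this.congr_deriv (by simp only [id_eq]; ring)
  -- derivatives of F₁
  have hFq1 : HasDerivAt (fun x => (1/2) * (x * p₂ - q₂ * p₁) ^ 2 + (x ^ 2 + q₂ ^ 2) * V (x, q₂))
      ((q₁ * p₂ - q₂ * p₁) * p₂ + (2 * q₁ * v + (q₁ ^ 2 + q₂ ^ 2) * Vx)) q₁ := by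
    have hA := ((((hasDerivAt_id q₁).mul_const p₂).sub_const (q₂ * p₁)).pow 2).const_mul
      ((1:ℝ)/2)
    have hB := (((hasDerivAt_id q₁).pow 2).add_const (q₂ ^ 2)).mul hVx
    have := hA.add hB
    exact this.congr_deriv (by simp [v]; ring)
  have hFq2 : HasDerivAt (fun y => (1/2) * (q₁ * p₂ - y * p₁) ^ 2 + (q₁ ^ 2 + y ^ 2) * V (q₁, y))
      ((q₁ * p₂ - q₂ * p₁) * (-p₁) + (2 * q₂ * v + (q₁ ^ 2 + q₂ ^ 2) * Vy)) q₂ := by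
    have hA := ((((hasDerivAt_id q₂).mul_const p₁).const_sub (q₁ * p₂)).pow 2).const_mul
      ((1:ℝ)/2)
    have hB := (((hasDerivAt_id q₂).pow 2).const_add (q₁ ^ 2)).mul hVy
    have := hA.add hB
    exact this.congr_deriv (by simp [v]; ring)
  have hFp1 : HasDerivAt (fun x => (1/2) * (q₁ * p₂ - q₂ * x) ^ 2 + (q₁ ^ 2 + q₂ ^ 2) * V (q₁, q₂))
      ((q₁ * p₂ - q₂ * p₁) * (-q₂)) p₁ := by
    have := (((((hasDerivAt_id p₁).const_mul q₂).const_sub (q₁ * p₂)).pow 2).const_mul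
      ((1:ℝ)/2)).add_const ((q₁ ^ 2 + q₂ ^ 2) * V (q₁, q₂))
    exact this.congr_deriv (by simp only [id_eq]; ring)
  have hFp2 : HasDerivAt (fun x => (1/2) * (q₁ * x - q₂ * p₁) ^ 2 + (q₁ ^ 2 + q₂ ^ 2) * V (q₁, q₂))
      ((q₁ * p₂ - q₂ * p₁) * q₁) p₂ := by
    have := (((((hasDerivAt_id p₂).const_mul q₁).sub_const (q₂ * p₁)).pow 2).const_mul
      ((1:ℝ)/2)).add_const ((q₁ ^ 2 + q₂ ^ 2) * V (q₁, q₂))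
    exact this.congr_deriv (by simp only [id_eq]; ring)
  rw [poissonBracket, hHq1.deriv, hHq2.deriv, hHp1.deriv, hHp2.deriv,
    hFq1.deriv, hFq2.deriv, hFp1.deriv, hFp2.deriv]
  linear_combination (-(q₁ * p₁ + q₂ * p₂)) * hEuler
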